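/- Let f_n, f be pdfs on ℝ^d with f_n → f in Lebesgue measure and with f·log f integrable. If the family g_n = f_n·|log f_n| is uniformly integrable (for every ε > 0 there is M with sup_n ∫_{g_n > M} g_n < ε), has uniformly bounded L¹ norms, and is tight (for every ε > 0 there is R with sup_n ∫_{|x|>R} g_n < ε), then the differential entropies converge: H(f_n) → H(f), where H(f) = −∫ f log f dλ. -/

import Mathlib

open MeasureTheory Filter Topology

theorem entropy_stmt3 (d : ℕ) (f : ℕ → EuclideanSpace ℝ (Fin d) → ℝ)
    (g : EuclideanSpace ℝ (Fin d) → ℝ)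
    (hfm : ∀ n, Measurable (f n)) (hf0 : ∀ n x, 0 ≤ f n x)
    (hf1 : ∀ n, ∫⁻ x, ENNReal.ofReal (f n x) = 1)
    (hgm : Measurable g) (hg0 : ∀ x, 0 ≤ g x)
    (hg1 : ∫⁻ x, ENNReal.ofReal (g x) = 1)
    (hconv : TendstoInMeasure volume f atTop g)
    (hglog : Integrable (fun x => g x * Real.log (g x)))
    (hUI : ∀ ε > (0:ℝ), ∃ M > (0:ℝ), ∀ n,
      ∫⁻ x in {x | M < f n x * |Real.log (f n x)|},
        ENNReal.ofReal (f n x * |Real.log (f n x)|) < ENNReal.ofReal ε)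
    (hL1 : ∃ B : ℝ, ∀ n,
      ∫⁻ x, ENNReal.ofReal (f n x * |Real.log (f n x)|) ≤ ENNReal.ofReal B)
    (hTight : ∀ ε > (0:ℝ), ∃ R > (0:ℝ), ∀ n,
      ∫⁻ x in {x | R < ‖x‖},
        ENNReal.ofReal (f n x * |Real.log (f n x)|) < ENNReal.ofReal ε) :
    Tendsto (fun n => -∫ x, f n x * Real.log (f n x)) atTop
      (nhds (-∫ x, g x * Real.log (g x))) := by
  set h : ℕ → EuclideanSpace ℝ (Fin d) → ℝ := fun n x => f n x * Real.log (f n x) with hh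
  set H : EuclideanSpace ℝ (Fin d) → ℝ := fun x => g x * Real.log (g x) with hH
  have habs : ∀ n x, ‖h n x‖ₑ = ENNReal.ofReal (f n x * |Real.log (f n x)|) := by
    intro n x
    rw [Real.enorm_eq_ofReal_abs, abs_mul, abs_of_nonneg (hf0 n x)]
  have hhm : ∀ n, Measurable (h n) := fun n =>
    (hfm n).mul (Real.measurable_log.comp (hfm n))
  -- integrability of h n
  obtain ⟨B, hB⟩ := hL1
  have hint : ∀ n, Integrable (h n) := by
    intro n
    refine ⟨(hhm n).aestronglyMeasurable, ?_⟩
    rw [HasFiniteIntegral]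
    calc ∫⁻ x, ‖h n x‖ₑ
        = ∫⁻ x, ENNReal.ofReal (f n x * |Real.log (f n x)|) := by
          simp_rw [habs]
      _ ≤ ENNReal.ofReal B := hB n
      _ < ⊤ := ENNReal.ofReal_lt_top
  -- UnifIntegrable
  have hUI' : UnifIntegrable h 1 volume := by
    intro ε hε
    obtain ⟨M, hM0, hMb⟩ := hUI ((ε : ℝ) / 2) (by positivity)
    refine ⟨(ε : ℝ) / 2 / M, by positivity, ?_⟩
    intro n s hs hμs
    rw [eLpNorm_indicator_eq_eLpNorm_restrict hs, eLpNorm_one_eq_lintegral_enorm]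
    simp_rw [habs]
    set A : Set (EuclideanSpace ℝ (Fin d)) := {x | M < f n x * |Real.log (f n x)|} with hA
    have hAmeas : MeasurableSet A :=
      measurableSet_lt measurable_const ((hfm n).mul ((Real.measurable_log.comp (hfm n)).abs))
    have hsplit := lintegral_inter_add_diff (μ := volume)
      (fun x => ENNReal.ofReal (f n x * |Real.log (f n x)|)) s hAmeas
    calc (∫⁻ x in s, ENNReal.ofReal (f n x * |Real.log (f n x)|))
        = (∫⁻ x in s ∩ A, ENNReal.ofReal (f n x * |Real.log (f n x)|))
          + ∫⁻ x in s \ A, ENNReal.ofReal (f n x * |Real.log (f n x)|) := hsplit.symm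
      _ ≤ ENNReal.ofReal ((ε : ℝ) / 2) + ENNReal.ofReal ((ε : ℝ) / 2) := by
          gcongr
          · exact le_of_lt (lt_of_le_of_lt
              (lintegral_mono_set Set.inter_subset_right) (hMb n))
          · calc (∫⁻ x in s \ A, ENNReal.ofReal (f n x * |Real.log (f n x)|))
                ≤ ∫⁻ _x in s \ A, ENNReal.ofReal M := by
                  refine setLIntegral_mono' (hs.diff hAmeas) fun x hx => ?_
                  exact ENNReal.ofReal_le_ofReal (not_lt.mp hx.2)
              _ = ENNReal.ofReal M * volume (s \ A) := by
                  rw [setLIntegral_const]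
              _ ≤ ENNReal.ofReal M * ENNReal.ofReal ((ε : ℝ) / 2 / M) := by
                  gcongr
                  exact le_trans (measure_mono Set.diff_subset) hμs
              _ = ENNReal.ofReal ((ε : ℝ) / 2) := by
                  rw [← ENNReal.ofReal_mul hM0.le]
                  congr 1
                  field_simp
      _ = ENNReal.ofReal ((ε : ℝ) / 2 + (ε : ℝ) / 2) := by
          rw [ENNReal.ofReal_add (by positivity) (by positivity)]
      _ = ENNReal.ofReal ε := by rw [add_halves]
  -- UnifTight
  have hUT' : UnifTight h 1 volume := by
    intro ε hε
    obtain ⟨R, hR0, hRb⟩ := hTight (ε : ℝ) (by exact_mod_cast hε)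
    refine ⟨Metric.closedBall 0 R, measure_closedBall_lt_top.ne, fun n => ?_⟩
    have hcompl : (Metric.closedBall (0 : EuclideanSpace ℝ (Fin d)) R)ᶜ = {x | R < ‖x‖} := by
      ext x
      simp [Metric.mem_closedBall, dist_zero_right, not_le]
    rw [eLpNorm_indicator_eq_eLpNorm_restrict (Metric.isClosed_closedBall.measurableSet.compl),
      eLpNorm_one_eq_lintegral_enorm]
    simp_rw [habs, hcompl]
    exact le_of_lt (by simpa [ENNReal.ofReal_coe_nnreal] using hRb n)
  -- main convergence via subsequences and Vitali (`tendsto_Lp_of_tendsto_ae`)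
  have key : Tendsto (fun n => ∫ x, h n x) atTop (𝓝 (∫ x, H x)) := by
    refine tendsto_of_subseq_tendsto fun ns hns => ?_
    obtain ⟨ms, _hms, hae⟩ := TendstoInMeasure.exists_seq_tendsto_ae
      (fun ε hε => (hconv ε hε).comp hns)
    refine ⟨ms, ?_⟩
    have haeh : ∀ᵐ x ∂(volume : Measure (EuclideanSpace ℝ (Fin d))),
        Tendsto (fun k => h (ns (ms k)) x) atTop (𝓝 (H x)) := by
      filter_upwards [hae] with x hx
      exact (Real.continuous_mul_log.tendsto (g x)).comp hx
    have hLp : Tendsto (fun k => eLpNorm (h (ns (ms k)) - H) 1 volume) atTop (𝓝 0) := by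
      refine tendsto_Lp_of_tendsto_ae le_rfl ENNReal.one_ne_top
        (fun k => (hhm _).aestronglyMeasurable)
        (memLp_one_iff_integrable.mpr hglog) ?_ ?_ haeh
      · intro ε hε
        obtain ⟨δ, hδ, hδ'⟩ := hUI' hε
        exact ⟨δ, hδ, fun k s hs hμs => hδ' _ s hs hμs⟩
      · intro ε hε
        obtain ⟨s, hμs, hfε⟩ := hUT' hε
        exact ⟨s, hμs, fun k => hfε _⟩
    refine tendsto_integral_of_L1 H hglog.aestronglyMeasurable (Eventually.of_forall fun k => hint _) ?_
    simpa only [eLpNorm_one_eq_lintegral_enorm, Pi.sub_apply] using hLp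
  exact key.neg
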